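/- Let k = 3m with m ≥ 1, and let R be the graph obtained from a complete graph K of order 2m−1 by taking the disjoint union of 2m+1 paths of order 2 and joining every vertex of these paths to all vertices of K. Then |V(R)| = 2k+1 and R contains no spanning path; moreover R has no {P2,P_{2k+1}}-factor, and for every X ⊆ V(R), c1(R−X) + c3(R−X) + c5(R−X) + … + c_{2k−1}(R−X) ≤ ((4k+6)/(8k+3))·|X| + (2k+3)/(8k+3). -/

import Mathlib

open SimpleGraph

/-- `cCount H i` is the number of connected components of `H` with exactly `i` vertices. -/
noncomputable def cCount {V : Type*} (H : SimpleGraph V) (i : ℕ) : ℕ :=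
  Nat.card {c : H.ConnectedComponent // Nat.card c.supp = i}

/-- The component `c` of `F` is (induces) a path of order `n`. -/
def IsPathComp {V : Type*} (F : SimpleGraph V) (n : ℕ) (c : F.ConnectedComponent) : Prop :=
  Nonempty ((SimpleGraph.induce c.supp F) ≃g SimpleGraph.pathGraph n)

/-- `G` has a spanning subgraph each of whose components is a path of order in `ns`. -/
def HasPathFamilyFactor {V : Type*} (G : SimpleGraph V) (ns : Set ℕ) : Prop :=
  ∃ F ≤ G, ∀ c : F.ConnectedComponent, ∃ n ∈ ns, IsPathComp F n c

/-- `F` is a path-factor of `G`: a spanning subgraph each of whose components is a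
path of order at least `2`. -/
def IsPathFactor {V : Type*} (G F : SimpleGraph V) : Prop :=
  F ≤ G ∧ ∀ c : F.ConnectedComponent, ∃ n, 2 ≤ n ∧ IsPathComp F n c

/-- The neighbourhood `N_G(X)`: vertices outside `X` adjacent to some vertex of `X`. -/
def nbhd {V : Type*} (G : SimpleGraph V) (X : Set V) : Set V :=
  {v | v ∉ X ∧ ∃ u ∈ X, G.Adj u v}

/-- The graph `R`: a complete graph on `2m−1` vertices joined completely to the
disjoint union of `2m+1` paths of order `2`. -/
def Rgraph (m : ℕ) : SimpleGraph (Fin (2 * m - 1) ⊕ Fin (2 * m + 1) × Fin 2) :=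
  SimpleGraph.fromRel (fun u v =>
    (∃ a b : Fin (2 * m - 1), u = Sum.inl a ∧ v = Sum.inl b) ∨
    (∃ (a : Fin (2 * m - 1)) (p : Fin (2 * m + 1) × Fin 2), u = Sum.inl a ∧ v = Sum.inr p) ∨
    (∃ (i : Fin (2 * m + 1)) (x y : Fin 2), u = Sum.inr (i, x) ∧ v = Sum.inr (i, y)))

lemma rg_adj_inl (m : ℕ) (a : Fin (2*m-1)) (w : Fin (2*m-1) ⊕ Fin (2*m+1) × Fin 2)
    (hw : Sum.inl a ≠ w) : (Rgraph m).Adj (Sum.inl a) w := by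
  rw [Rgraph, fromRel_adj]
  refine ⟨hw, ?_⟩
  rcases w with b | p
  · exact Or.inl (Or.inl ⟨a, b, rfl, rfl⟩)
  · exact Or.inl (Or.inr (Or.inl ⟨a, p, rfl, rfl⟩))

lemma rg_adj_inr_iff (m : ℕ) (i j : Fin (2*m+1)) (x y : Fin 2) :
    (Rgraph m).Adj (Sum.inr (i,x)) (Sum.inr (j,y)) ↔ i = j ∧ x ≠ y := by
  rw [Rgraph, fromRel_adj]
  constructor
  · rintro ⟨hne, (⟨a, b, h1, h2⟩ | ⟨a, p, h1, h2⟩ | ⟨i', x', y', h1, h2⟩) |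
      (⟨a, b, h1, h2⟩ | ⟨a, p, h1, h2⟩ | ⟨i', x', y', h1, h2⟩)⟩ <;> simp_all
  · rintro ⟨rfl, hxy⟩
    exact ⟨by simp [hxy], Or.inl (Or.inr (Or.inr ⟨i, x, y, rfl, rfl⟩))⟩

def edgeLabel (m : ℕ) (u v : Fin (2*m-1) ⊕ Fin (2*m+1) × Fin 2) :
    (Fin (2*m-1) × Fin 2) ⊕ Fin (2*m+1) :=
  match u, v with
  | Sum.inl x, _ => Sum.inl (x, 0)
  | Sum.inr _, Sum.inl y => Sum.inl (y, 1)
  | Sum.inr (i, _), Sum.inr _ => Sum.inr i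

lemma no_spanning (m : ℕ) (hm : 1 ≤ m) (n : ℕ) (hn : n = 6 * m + 1)
    (f : Fin n → Fin (2*m-1) ⊕ Fin (2*m+1) × Fin 2) (hinj : Function.Injective f)
    (hadj : ∀ a b, (SimpleGraph.pathGraph n).Adj a b → (Rgraph m).Adj (f a) (f b)) :
    False := by
  set g : ℕ → Fin (2*m-1) ⊕ Fin (2*m+1) × Fin 2 :=
    fun t => if h : t < n then f ⟨t, h⟩ else f ⟨0, by omega⟩ with hg
  have hgdef : ∀ t (h : t < n), g t = f ⟨t, h⟩ := by
    intro t h; rw [hg]; exact dif_pos h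
  have hge : ∀ t, t < 6 * m → (Rgraph m).Adj (g t) (g (t + 1)) := by
    intro t ht
    rw [hgdef t (by omega), hgdef (t+1) (by omega)]
    apply hadj
    rw [pathGraph_adj]
    left; rfl
  have hginj : ∀ t t', t < n → t' < n → g t = g t' → t = t' := by
    intro t t' h h' he
    rw [hgdef t h, hgdef t' h'] at he
    exact congrArg Fin.val (hinj he)
  have hcard := Fintype.card_le_of_injective
    (fun t : Fin (6*m) => edgeLabel m (g t) (g (t+1))) ?_
  · simp only [Fintype.card_fin, Fintype.card_sum, Fintype.card_prod] at hcard
    omega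
  intro t t' heq
  have h1 := hge t t.isLt
  have h2 := hge t' t'.isLt
  have htn : (t:ℕ) < n := by omega
  have htn1 : (t:ℕ) + 1 < n := by omega
  have ht'n : (t':ℕ) < n := by omega
  have ht'n1 : (t':ℕ) + 1 < n := by omega
  simp only at heq
  rcases hA : g t with x | ⟨i, x⟩ <;> rcases hA' : g t' with x' | ⟨i', x'⟩
  · -- both inl
    simp only [hA, hA', edgeLabel, Sum.inl.injEq, Prod.mk.injEq] at heq
    exact Fin.ext (hginj _ _ htn ht'n (by rw [hA, hA', heq.1]))
  · -- t inl, t' inr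
    rcases hB' : g (t'+1) with y' | p'
    · simp only [hA, hA', hB', edgeLabel, Sum.inl.injEq, Prod.mk.injEq] at heq
      exact absurd heq.2 (by decide)
    · simp only [hA, hA', hB', edgeLabel] at heq
      exact absurd heq (by simp)
  · -- t inr, t' inl
    rcases hB : g (t+1) with y | p
    · simp only [hA, hA', hB, edgeLabel, Sum.inl.injEq, Prod.mk.injEq] at heq
      exact absurd heq.2 (by decide)
    · simp only [hA, hA', hB, edgeLabel] at heq
      exact absurd heq (by simp)
  · -- both inr
    rcases hB : g (t+1) with y | ⟨j, z⟩ <;> rcases hB' : g (t'+1) with y' | ⟨j', z'⟩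
    · simp only [hA, hA', hB, hB', edgeLabel, Sum.inl.injEq, Prod.mk.injEq] at heq
      have : (t:ℕ) + 1 = (t':ℕ) + 1 := hginj _ _ htn1 ht'n1 (by rw [hB, hB', heq.1])
      exact Fin.ext (by omega)
    · simp only [hA, hA', hB, hB', edgeLabel] at heq
      exact absurd heq (by simp)
    · simp only [hA, hA', hB, hB', edgeLabel] at heq
      exact absurd heq (by simp)
    rw [hA, hB, rg_adj_inr_iff] at h1
    rw [hA', hB', rg_adj_inr_iff] at h2
    obtain ⟨rfl, hxz⟩ := h1
    obtain ⟨rfl, hxz'⟩ := h2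
    simp only [hA, hA', hB, hB', edgeLabel, Sum.inr.injEq] at heq
    subst heq
    by_cases hxx : x = x'
    · subst hxx
      exact Fin.ext (hginj _ _ htn ht'n (by rw [hA, hA']))
    · have e1 : x = z' := by omega
      have e2 : z = x' := by omega
      have k1 : (t:ℕ) = (t':ℕ) + 1 := hginj _ _ htn ht'n1 (by rw [hA, hB', e1])
      have k2 : (t:ℕ) + 1 = (t':ℕ) := hginj _ _ htn1 ht'n (by rw [hB, hA', e2])
      omega

lemma cCount_eq_of_all_eq {V : Type*} (H : SimpleGraph V) (c₀ : H.ConnectedComponent)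
    (h : ∀ c : H.ConnectedComponent, c = c₀) (j : ℕ) :
    cCount H j = if Nat.card c₀.supp = j then 1 else 0 := by
  classical
  rw [cCount]
  split_ifs with hj
  · rw [Nat.card_eq_one_iff_unique]
    exact ⟨⟨fun a b => Subtype.ext ((h a.1).trans (h b.1).symm)⟩, ⟨⟨c₀, hj⟩⟩⟩
  · haveI : IsEmpty {c : H.ConnectedComponent // Nat.card c.supp = j} :=
      ⟨fun c => hj (by rw [← h c.1]; exact c.2)⟩
    exact Nat.card_of_isEmpty

set_option maxHeartbeats 1000000 in
/-- for `k = 3m`, `R` has order `2k+1`, contains no spanning path, has no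
`{P₂, P_{2k+1}}`-factor, and satisfies the odd-component counting inequality. -/
theorem stmt17 (m : ℕ) (hm : 1 ≤ m) (k : ℕ) (hk : k = 3 * m) :
    Fintype.card (Fin (2 * m - 1) ⊕ Fin (2 * m + 1) × Fin 2) = 2 * k + 1 ∧
    (¬ ∃ f : Fin (2 * k + 1) → (Fin (2 * m - 1) ⊕ Fin (2 * m + 1) × Fin 2),
      Function.Injective f ∧
        ∀ a b, (SimpleGraph.pathGraph (2 * k + 1)).Adj a b → (Rgraph m).Adj (f a) (f b)) ∧
    ¬ HasPathFamilyFactor (Rgraph m) {2, 2 * k + 1} ∧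
    ∀ X : Set (Fin (2 * m - 1) ⊕ Fin (2 * m + 1) × Fin 2),
      (∑ i ∈ Finset.range k, (cCount (SimpleGraph.induce Xᶜ (Rgraph m)) (2 * i + 1) : ℚ)) ≤
        ((4 * k + 6) / (8 * k + 3)) * X.ncard + (2 * k + 3) / (8 * k + 3) := by
  subst hk
  classical
  have hcardV : Fintype.card (Fin (2 * m - 1) ⊕ Fin (2 * m + 1) × Fin 2) = 2 * (3 * m) + 1 := by
    simp only [Fintype.card_sum, Fintype.card_prod, Fintype.card_fin]
    omega
  have hns : ¬ ∃ f : Fin (2 * (3 * m) + 1) → (Fin (2 * m - 1) ⊕ Fin (2 * m + 1) × Fin 2),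
      Function.Injective f ∧
        ∀ a b, (SimpleGraph.pathGraph (2 * (3 * m) + 1)).Adj a b →
          (Rgraph m).Adj (f a) (f b) := by
    rintro ⟨f, hinj, hadj⟩
    exact no_spanning m hm _ (by omega) f hinj hadj
  refine ⟨hcardV, hns, ?_, ?_⟩
  · -- no {P2, P_{2k+1}}-factor
    rintro ⟨F, hFG, hcomp⟩
    have hsupp : ∀ (c : F.ConnectedComponent) (n : ℕ),
        IsPathComp F n c → Nat.card c.supp = n := by
      rintro c n ⟨iso⟩
      simpa using Nat.card_congr iso.toEquiv
    by_cases hbig : ∃ c : F.ConnectedComponent, IsPathComp F (2 * (3 * m) + 1) c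
    · obtain ⟨c, ⟨iso⟩⟩ := hbig
      have hsc : Nat.card c.supp = 2 * (3 * m) + 1 := hsupp c _ ⟨iso⟩
      have huniv : c.supp = Set.univ := by
        apply Set.eq_of_subset_of_ncard_le (Set.subset_univ _)
        rw [Set.ncard_univ, ← Nat.card_coe_set_eq, hsc, Nat.card_eq_fintype_card, hcardV]
      apply hns
      refine ⟨fun t => ((iso.symm t : ↥c.supp) : Fin (2 * m - 1) ⊕ Fin (2 * m + 1) × Fin 2),
        ?_, ?_⟩
      · intro a b hab
        exact iso.symm.injective (Subtype.ext hab)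
      · intro a b hab
        exact hFG (iso.symm.map_rel_iff.mpr hab)
    · push_neg at hbig
      have hall2 : ∀ c : F.ConnectedComponent, Nat.card c.supp = 2 := by
        intro c
        obtain ⟨n, hn, hp⟩ := hcomp c
        simp only [Set.mem_insert_iff, Set.mem_singleton_iff] at hn
        rcases hn with rfl | rfl
        · exact hsupp c 2 hp
        · exact absurd hp (hbig c)
      haveI : Fintype F.ConnectedComponent := Fintype.ofFinite _
      have hfib := Finset.card_eq_sum_card_fiberwise
        (f := F.connectedComponentMk) (s := Finset.univ) (t := Finset.univ)
        (fun x _ => Finset.mem_univ _)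
      have hterm : ∀ c : F.ConnectedComponent,
          (Finset.univ.filter (fun v => F.connectedComponentMk v = c)).card = 2 := by
        intro c
        rw [← Fintype.card_subtype]
        have e : Fintype.card { x // F.connectedComponentMk x = c } = Nat.card c.supp := by
          rw [← Nat.card_eq_fintype_card]
          exact Nat.card_congr (Equiv.subtypeEquivRight
            (fun v => (ConnectedComponent.mem_supp_iff c v).symm))
        rw [e, hall2 c]
      rw [Finset.sum_congr rfl (fun c _ => hterm c), Finset.sum_const, smul_eq_mul] at hfib
      rw [Finset.card_univ, hcardV] at hfib
      omega
  · -- the counting inequality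
    intro X
    set H := SimpleGraph.induce Xᶜ (Rgraph m) with hH
    have hNV : Nat.card (Fin (2 * m - 1) ⊕ Fin (2 * m + 1) × Fin 2) = 6 * m + 1 := by
      rw [Nat.card_eq_fintype_card, hcardV]; omega
    have hXc : X.ncard + Xᶜ.ncard = 6 * m + 1 := by
      rw [Set.ncard_add_ncard_compl, hNV]
    by_cases hKX : ∀ a : Fin (2 * m - 1), Sum.inl a ∈ X
    · -- Case B : all clique vertices deleted
      have hinr : ∀ v : ↥Xᶜ, ∃ (i : Fin (2 * m + 1)) (x : Fin 2), v.1 = Sum.inr (i, x) := by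
        rintro ⟨v, hv⟩
        rcases v with a | ⟨i, x⟩
        · exact absurd (hKX a) hv
        · exact ⟨i, x, rfl⟩
      set pidx : (Fin (2 * m - 1) ⊕ Fin (2 * m + 1) × Fin 2) → Fin (2 * m + 1) :=
        Sum.elim (fun _ => ⟨0, by omega⟩) Prod.fst with hpidx
      have hadj_idx : ∀ u v : ↥Xᶜ, H.Adj u v → pidx u.1 = pidx v.1 := by
        intro u v huv
        obtain ⟨i, x, hu⟩ := hinr u
        obtain ⟨j, y, hv⟩ := hinr v
        have hA : (Rgraph m).Adj u.1 v.1 := huv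
        rw [hu, hv, rg_adj_inr_iff] at hA
        rw [hu, hv]
        simp [hpidx, hA.1]
      have hwalk : ∀ (u v : ↥Xᶜ), H.Walk u v → pidx u.1 = pidx v.1 := by
        intro u v p
        induction p with
        | nil => rfl
        | cons h p ih => exact (hadj_idx _ _ h).trans ih
      have hsupp2 : ∀ c : H.ConnectedComponent, Nat.card c.supp ≤ 2 := by
        intro c
        obtain ⟨v, hv⟩ := c.exists_rep
        have hmem : ∀ w : ↥Xᶜ, w ∈ c.supp → pidx w.1 = pidx v.1 := by
          intro w hw
          rw [ConnectedComponent.mem_supp_iff] at hw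
          have hr : H.Reachable w v := ConnectedComponent.eq.mp (hw.trans hv.symm)
          obtain ⟨p⟩ := hr
          exact hwalk _ _ p
        have hinj2 : Function.Injective
            (fun w : ↥c.supp => (Sum.elim (fun _ => (0 : Fin 2)) Prod.snd w.1.1 : Fin 2)) := by
          intro w w' hww
          obtain ⟨i, x, hw1⟩ := hinr w.1
          obtain ⟨i', x', hw1'⟩ := hinr w'.1
          have e1 : pidx w.1.1 = pidx v.1 := hmem w.1 w.2
          have e2 : pidx w'.1.1 = pidx v.1 := hmem w'.1 w'.2
          simp only at hww
          rw [hw1] at e1 hww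
          rw [hw1'] at e2 hww
          simp only [hpidx, Sum.elim_inr] at e1 e2 hww
          apply Subtype.ext; apply Subtype.ext
          rw [hw1, hw1', e1.trans e2.symm, hww]
        calc Nat.card c.supp ≤ Nat.card (Fin 2) := Nat.card_le_card_of_injective _ hinj2
        _ = 2 := by simp
      have hczero : ∀ i, 1 ≤ i → cCount H (2 * i + 1) = 0 := by
        intro i hi
        rw [cCount]
        haveI : IsEmpty {c : H.ConnectedComponent // Nat.card c.supp = 2 * i + 1} := by
          refine ⟨fun c => ?_⟩
          have h2 := hsupp2 c.1
          have h3 := c.2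
          omega
        exact Nat.card_of_isEmpty
      set T := {c : H.ConnectedComponent // Nat.card c.supp = 1} with hT
      have hrep : ∀ c : T, ∃ (v : ↥Xᶜ) (i : Fin (2 * m + 1)) (x : Fin 2),
          H.connectedComponentMk v = c.1 ∧ v.1 = Sum.inr (i, x) := by
        intro c
        obtain ⟨v, hv⟩ := c.1.exists_rep
        obtain ⟨i, x, hix⟩ := hinr v
        exact ⟨v, i, x, hv, hix⟩
      choose rv ri rx hmk hval using hrep
      have hsingle : ∀ (c : T) (w : ↥Xᶜ), H.connectedComponentMk w = c.1 → w = rv c := by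
        intro c w hw
        have h1 := c.2
        rw [Nat.card_eq_one_iff_unique] at h1
        have hwm : w ∈ c.1.supp := (ConnectedComponent.mem_supp_iff _ _).2 hw
        have hvm : rv c ∈ c.1.supp := (ConnectedComponent.mem_supp_iff _ _).2 (hmk c)
        have := h1.1
        exact congrArg Subtype.val (Subsingleton.elim (⟨w, hwm⟩ : ↥c.1.supp) ⟨rv c, hvm⟩)
      have hflip : ∀ x : Fin 2, x + 1 ≠ x := by decide
      have hpartner : ∀ c : T, Sum.inr (ri c, rx c + 1) ∈ X := by
        intro c
        by_contra hmem
        have hXc2 : (Sum.inr (ri c, rx c + 1) :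
            Fin (2 * m - 1) ⊕ Fin (2 * m + 1) × Fin 2) ∈ Xᶜ := hmem
        have hadjR : (Rgraph m).Adj (Sum.inr (ri c, rx c + 1)) (rv c).1 := by
          rw [hval c, rg_adj_inr_iff]
          exact ⟨rfl, hflip _⟩
        have hadj : H.Adj ⟨_, hXc2⟩ (rv c) := hadjR
        have heqv : (⟨_, hXc2⟩ : ↥Xᶜ) = rv c :=
          hsingle c _ ((ConnectedComponent.sound hadj.reachable).trans (hmk c))
        have hcast := congrArg Subtype.val heqv
        rw [hval c] at hcast
        simp only [Sum.inr.injEq, Prod.mk.injEq] at hcast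
        exact hflip _ hcast.2
      have hri : Function.Injective ri := by
        intro c c' he
        by_cases hxx : rx c = rx c'
        · have h4 : rv c = rv c' := Subtype.ext (by rw [hval c, hval c', he, hxx])
          have h5 : c.1 = c'.1 := by rw [← hmk c, ← hmk c', h4]
          exact Subtype.ext h5
        · have hadjR : (Rgraph m).Adj (rv c).1 (rv c').1 := by
            rw [hval c, hval c', rg_adj_inr_iff]
            exact ⟨he, hxx⟩
          have hadj : H.Adj (rv c) (rv c') := hadjR
          have h5 : c.1 = c'.1 := by
            rw [← hmk c, ← hmk c']
            exact ConnectedComponent.sound hadj.reachable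
          exact Subtype.ext h5
      have hT21 : Nat.card T ≤ 2 * m + 1 := by
        have h6 := Nat.card_le_card_of_injective ri hri
        rwa [Nat.card_eq_fintype_card (α := Fin (2 * m + 1)), Fintype.card_fin] at h6
      have hinjΨ : Function.Injective
          (Sum.elim (fun a : Fin (2 * m - 1) => (⟨Sum.inl a, hKX a⟩ : ↥X))
            (fun c : T => (⟨Sum.inr (ri c, rx c + 1), hpartner c⟩ : ↥X))) := by
        rintro (a | c) (a' | c') h <;>
          simp only [Sum.elim_inl, Sum.elim_inr, Subtype.mk.injEq] at h
        · rw [Sum.inl.injEq] at h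
          rw [h]
        · exact absurd h (by simp)
        · exact absurd h (by simp)
        · simp only [Sum.inr.injEq, Prod.mk.injEq] at h
          rw [hri h.1]
      have hcards : 2 * m - 1 + Nat.card T ≤ X.ncard := by
        have h1 := Nat.card_le_card_of_injective _ hinjΨ
        rw [Nat.card_sum, Nat.card_coe_set_eq,
          Nat.card_eq_fintype_card (α := Fin (2 * m - 1)), Fintype.card_fin] at h1
        exact h1
      have hone : cCount H 1 = Nat.card T := rfl
      have hsum : (∑ i ∈ Finset.range (3 * m), (cCount H (2 * i + 1) : ℚ))
          = (Nat.card T : ℚ) := by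
        rw [Finset.sum_eq_single_of_mem 0 (Finset.mem_range.2 (by omega))
          (fun i _ hi => by rw [hczero i (by omega)]; exact Nat.cast_zero)]
        exact congrArg (fun n : ℕ => (n : ℚ)) hone
      rw [hsum]
      rw [div_mul_eq_mul_div, ← add_div, le_div_iff₀ (by positivity)]
      have hxq : (2 * (m : ℚ) - 1) + Nat.card T ≤ (X.ncard : ℚ) := by
        have h7 : ((2 * m - 1 + Nat.card T : ℕ) : ℚ) ≤ (X.ncard : ℚ) := by
          exact_mod_cast hcards
        have h8 : ((2 * m - 1 : ℕ) : ℚ) = 2 * (m : ℚ) - 1 := by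
          rw [Nat.cast_sub (by omega)]
          push_cast; ring
        rw [Nat.cast_add, h8] at h7
        exact h7
      have htq : (Nat.card T : ℚ) ≤ 2 * m + 1 := by exact_mod_cast hT21
      have hmq : (1 : ℚ) ≤ m := by exact_mod_cast hm
      push_cast
      nlinarith [mul_le_mul_of_nonneg_right htq (show (0 : ℚ) ≤ 12 * m - 3 by nlinarith),
        mul_le_mul_of_nonneg_left hxq (show (0 : ℚ) ≤ 12 * m + 6 by nlinarith)]
    · -- Case A : a clique vertex survives, graph is connected
      push_neg at hKX
      obtain ⟨a₀, ha₀⟩ := hKX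
      have hv₀ : (Sum.inl a₀ : Fin (2 * m - 1) ⊕ Fin (2 * m + 1) × Fin 2) ∈ Xᶜ := ha₀
      set v₀ : ↥Xᶜ := ⟨Sum.inl a₀, hv₀⟩ with hv0def
      have hallc : ∀ c : H.ConnectedComponent, c = H.connectedComponentMk v₀ := by
        intro c
        obtain ⟨v, rfl⟩ := c.exists_rep
        apply ConnectedComponent.sound
        by_cases hv : v = v₀
        · rw [hv]
        · have hne : Sum.inl a₀ ≠ v.1 := fun h => hv (Subtype.ext h.symm)
          have hadj : H.Adj v v₀ := ((rg_adj_inl m a₀ v.1 hne).symm :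
            (Rgraph m).Adj v.1 v₀.1)
          exact hadj.reachable
      have hsupp0 : Nat.card (H.connectedComponentMk v₀).supp = Xᶜ.ncard := by
        have huniv : (H.connectedComponentMk v₀).supp = Set.univ := by
          ext w
          simp only [ConnectedComponent.mem_supp_iff, Set.mem_univ, iff_true]
          exact hallc _
        rw [huniv, ← Nat.card_coe_set_eq]
        exact Nat.card_congr (Equiv.Set.univ _)
      have hcc : ∀ j, cCount H j = if Xᶜ.ncard = j then 1 else 0 := fun j =>
        (cCount_eq_of_all_eq H _ hallc j).trans (by rw [hsupp0])
      have hsum : (∑ i ∈ Finset.range (3 * m), (cCount H (2 * i + 1) : ℚ))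
          = (((Finset.range (3 * m)).filter (fun i => Xᶜ.ncard = 2 * i + 1)).card : ℚ) := by
        rw [← Finset.sum_boole]
        refine Finset.sum_congr rfl (fun i _ => ?_)
        rw [hcc]
        split_ifs <;> simp
      rw [hsum]
      by_cases hex : ∃ i ∈ Finset.range (3 * m), Xᶜ.ncard = 2 * i + 1
      · obtain ⟨i, hi, hNi⟩ := hex
        have hfil : ((Finset.range (3 * m)).filter (fun i => Xᶜ.ncard = 2 * i + 1)).card = 1 := by
          apply le_antisymm
          · apply Finset.card_le_one.2
            intro a ha b hb
            simp only [Finset.mem_filter] at ha hb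
            omega
          · exact Finset.card_pos.2 ⟨i, Finset.mem_filter.2 ⟨hi, hNi⟩⟩
        rw [hfil]
        have hX2 : 2 ≤ X.ncard := by
          simp only [Finset.mem_range] at hi
          omega
        have hx : (2 : ℚ) ≤ (X.ncard : ℚ) := by exact_mod_cast hX2
        rw [div_mul_eq_mul_div, ← add_div, le_div_iff₀ (by positivity)]
        push_cast
        have hmq : (1 : ℚ) ≤ m := by exact_mod_cast hm
        nlinarith [mul_le_mul_of_nonneg_left hx (show (0 : ℚ) ≤ 4 * (3 * (m : ℚ)) + 6 by nlinarith)]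
      · have hfil : ((Finset.range (3 * m)).filter (fun i => Xᶜ.ncard = 2 * i + 1)) = ∅ :=
          Finset.filter_eq_empty_iff.2 (fun i hi h => hex ⟨i, hi, h⟩)
        rw [hfil]
        simp only [Finset.card_empty, Nat.cast_zero]
        positivity
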